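/- For the nodal cubic C = V(x^3 + x^2 - y^2) over ℝ, the limits of tangent directions at nonsingular points of C approaching the origin are exactly the two lines y = x and y = -x. Concretely: if (a_n, b_n) is a sequence of points of C with (a_n, b_n) ≠ (0,0), (a_n,b_n) → (0,0), and the normalized gradient directions converge, then the limit tangent line is {(x,y) : x - y = 0} or {(x,y) : x + y = 0}. -/

import Mathlib

open Filter

/-- Limits of tangent lines to the nodal cubic at nonsingular points approaching the
origin: the limiting line is `x - y = 0` or `x + y = 0`. -/
theorem stmt_1 (a b : ℕ → ℝ)
    (hC : ∀ n, (a n) ^ 3 + (a n) ^ 2 - (b n) ^ 2 = 0)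
    (hne : ∀ n, (a n, b n) ≠ (0, 0))
    (hlim : Tendsto (fun n => (a n, b n)) atTop (nhds (0, 0)))
    (v : ℝ × ℝ)
    (hv : Tendsto
      (fun n => (‖((3 * (a n) ^ 2 + 2 * a n, -2 * b n) : ℝ × ℝ)‖)⁻¹ •
        ((3 * (a n) ^ 2 + 2 * a n, -2 * b n) : ℝ × ℝ)) atTop (nhds v)) :
    {p : ℝ × ℝ | v.1 * p.1 + v.2 * p.2 = 0} = {p : ℝ × ℝ | p.1 - p.2 = 0} ∨
    {p : ℝ × ℝ | v.1 * p.1 + v.2 * p.2 = 0} = {p : ℝ × ℝ | p.1 + p.2 = 0} := by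
  set g : ℕ → ℝ × ℝ := fun n => ((3 * (a n) ^ 2 + 2 * a n, -2 * b n) : ℝ × ℝ) with hgdef
  have ha : Tendsto a atTop (nhds 0) := by
    simpa [Function.comp_def] using (continuous_fst.tendsto ((0:ℝ),(0:ℝ))).comp hlim
  have hane : ∀ n, a n ≠ 0 := by
    intro n h
    have hb : b n = 0 := by
      have := sq_nonneg (b n); nlinarith [hC n]
    exact hne n (by simp [h, hb])
  have hb2 : ∀ n, (b n) ^ 2 = (a n) ^ 2 * (a n + 1) := by
    intro n; linear_combination -hC n
  have hsmall : ∀ᶠ n in atTop, |a n| < 1/2 := by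
    have := ha (Metric.ball_mem_nhds (0:ℝ) (by norm_num : (0:ℝ) < 1/2))
    simpa [Real.dist_eq] using this
  have hgnorm_ge : ∀ᶠ n in atTop,
      0 < |3 * a n ^ 2 + 2 * a n| ∧ |3 * a n ^ 2 + 2 * a n| ≤ ‖g n‖ := by
    filter_upwards [hsmall] with n hn
    constructor
    · rw [abs_pos, show 3 * a n ^ 2 + 2 * a n = a n * (3 * a n + 2) by ring]
      have h1 : 3 * a n + 2 > 0 := by cases abs_lt.mp hn; linarith
      exact mul_ne_zero (hane n) (by linarith)
    · rw [hgdef]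
      simpa [Prod.norm_def, Real.norm_eq_abs] using
        le_max_left |3 * a n ^ 2 + 2 * a n| |(-2 : ℝ) * b n|
  have hnormv : ‖v‖ = 1 := by
    have h1 : Tendsto (fun n => ‖(‖g n‖)⁻¹ • g n‖) atTop (nhds ‖v‖) := hv.norm
    have h2 : Tendsto (fun n => ‖(‖g n‖)⁻¹ • g n‖) atTop (nhds 1) := by
      apply Tendsto.congr' _ tendsto_const_nhds
      filter_upwards [hgnorm_ge] with n hn
      obtain ⟨hp, hle⟩ := hn
      have hgn : ‖g n‖ ≠ 0 := ne_of_gt (lt_of_lt_of_le hp hle)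
      rw [norm_smul, norm_inv, norm_norm, inv_mul_cancel₀ hgn]
    exact tendsto_nhds_unique h1 h2
  have hsq : v.1 ^ 2 = v.2 ^ 2 := by
    set F : ℕ → ℝ := fun n => ((‖g n‖)⁻¹ • g n).1 ^ 2 - ((‖g n‖)⁻¹ • g n).2 ^ 2 with hF
    have hFv : Tendsto F atTop (nhds (v.1 ^ 2 - v.2 ^ 2)) := by
      have hc : Continuous (fun p : ℝ × ℝ => p.1 ^ 2 - p.2 ^ 2) := by continuity
      exact (hc.tendsto v).comp hv
    have hF0 : Tendsto F atTop (nhds 0) := by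
      have hh : Tendsto (fun n => |a n| * |9 * a n + 8| / (3 * a n + 2) ^ 2) atTop (nhds 0) := by
        have h1 : Tendsto (fun n => |a n| * |9 * a n + 8|) atTop (nhds 0) := by
          have := (ha.abs.mul (((ha.const_mul 9).add (tendsto_const_nhds (x := (8:ℝ)))).abs))
          simpa using this
        have h2 : Tendsto (fun n => (3 * a n + 2) ^ 2) atTop (nhds ((2:ℝ) ^ 2)) := by
          have := ((ha.const_mul 3).add (tendsto_const_nhds (x := (2:ℝ)))).pow 2
          simpa using this
        simpa [Pi.div_def] using h1.div h2 (by norm_num)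
      apply squeeze_zero_norm' _ hh
      filter_upwards [hgnorm_ge, hsmall] with n hn' hn
      obtain ⟨hp, hle⟩ := hn'
      have h2pos : (0:ℝ) < 3 * a n + 2 := by cases abs_lt.mp hn; linarith
      have hdiff : (3 * a n ^ 2 + 2 * a n) ^ 2 - (-2 * b n) ^ 2
          = (a n) ^ 3 * (9 * a n + 8) := by linear_combination -4 * hb2 n
      have hgn : (0:ℝ) < ‖g n‖ := lt_of_lt_of_le hp hle
      have hFeq : F n = (‖g n‖)⁻¹ ^ 2 *
          ((3 * a n ^ 2 + 2 * a n) ^ 2 - (-2 * b n) ^ 2) := by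
        simp only [hF, hgdef, Prod.smul_fst, Prod.smul_snd, smul_eq_mul]
        ring
      have hinv : (‖g n‖)⁻¹ ^ 2 ≤ (|3 * a n ^ 2 + 2 * a n|⁻¹) ^ 2 := by
        have := inv_anti₀ hp hle
        exact pow_le_pow_left₀ (by positivity) this 2
      have hD : |a n ^ 3 * (9 * a n + 8)| = |a n| ^ 3 * |9 * a n + 8| := by
        rw [abs_mul, abs_pow]
      have hG : |3 * a n ^ 2 + 2 * a n| = |a n| * (3 * a n + 2) := by
        rw [show 3 * a n ^ 2 + 2 * a n = a n * (3 * a n + 2) by ring, abs_mul,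
          abs_of_pos h2pos]
      have hane' : |a n| ≠ 0 := abs_ne_zero.mpr (hane n)
      calc ‖F n‖ = (‖g n‖)⁻¹ ^ 2 * |a n ^ 3 * (9 * a n + 8)| := by
            rw [hFeq, hdiff, Real.norm_eq_abs, abs_mul, abs_pow, abs_inv, abs_norm]
        _ ≤ (|3 * a n ^ 2 + 2 * a n|⁻¹) ^ 2 * |a n ^ 3 * (9 * a n + 8)| :=
            mul_le_mul_of_nonneg_right hinv (abs_nonneg _)
        _ = |a n| * |9 * a n + 8| / (3 * a n + 2) ^ 2 := by
            rw [hD, hG]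
            field_simp
    have := tendsto_nhds_unique hFv hF0
    linarith
  have hv1ne : v.1 ≠ 0 := by
    intro h
    have h2 : v.2 = 0 := by
      have h3 : v.2 ^ 2 = 0 := by rw [← hsq, h]; ring
      exact pow_eq_zero_iff (n := 2) (by norm_num) |>.mp h3
    have hz : v = 0 := Prod.ext h h2
    rw [hz] at hnormv; simp at hnormv
  have hfac : (v.1 - v.2) * (v.1 + v.2) = 0 := by linear_combination hsq
  rcases mul_eq_zero.mp hfac with h | h
  · -- v.1 = v.2 : line x + y = 0
    right
    have h' : v.2 = v.1 := by linarith
    ext p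
    simp only [Set.mem_setOf_eq]
    constructor
    · intro hp
      have hz : v.1 * (p.1 + p.2) = 0 := by rw [mul_add]; rw [h'] at hp; linarith
      exact (mul_eq_zero.mp hz).resolve_left hv1ne
    · intro hp
      have hq : p.2 = -p.1 := by linarith
      rw [hq, h']; ring
  · -- v.1 = -v.2 : line x - y = 0
    left
    have h' : v.2 = -v.1 := by linarith
    ext p
    simp only [Set.mem_setOf_eq]
    constructor
    · intro hp
      have hz : v.1 * (p.1 - p.2) = 0 := by rw [mul_sub]; rw [h'] at hp; linarith
      exact (mul_eq_zero.mp hz).resolve_left hv1ne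
    · intro hp
      have hq : p.2 = p.1 := by linarith
      rw [hq, h']; ring
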